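/- Assume A ∈ R^{n×n} is invertible, M = I − A is invertible, and full AA and GMRES are applied with the same initial guess x_0 ≠ x*, with ‖r_{k−1}^G‖₂ > ‖r_k^G‖₂ strictly decreasing on the relevant range so that x_{k+1}^A = x_k^G − r_k^G. Then for full AA: (i) the minimized quantity satisfies min over γ^{(k)} of ‖M^{−1} r_{k+1}^A‖₂² = min ‖r_k^G‖₂ (i.e., r_{k+1}^A = M r_k^G and ‖M^{−1} r_{k+1}^A‖₂ = ‖r_k^G‖₂); (ii) M^{−1} r_{k+1}^A ⊥ A K_k; and (iii) if M is symmetric, then r_{k+1}^A ⊥ M^{−1} A K_k. -/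
import Mathlib


open Matrix Filter

noncomputable section

/-- The residual `r(x) = A x - b` of the linear system `A x = b`. -/
def residv {n : ℕ} (A : Matrix (Fin n) (Fin n) ℝ) (b x : Fin n → ℝ) : Fin n → ℝ :=
  A.mulVec x - b

/-- The Euclidean 2-norm on `Fin n → ℝ`. -/
def norm2 {n : ℕ} (x : Fin n → ℝ) : ℝ := Real.sqrt (x ⬝ᵥ x)

/-- The fixed-point map `q(x) = M x + b` with `M = I - A`. -/
def qmap {n : ℕ} (A : Matrix (Fin n) (Fin n) ℝ) (b x : Fin n → ℝ) : Fin n → ℝ :=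
  (1 - A).mulVec x + b

/-- One NGMRES update from step `k`, with window `mk` and coefficients `β`:
`x_{k+1} = q(x_k) + ∑_{i=0}^{mk} β_i (q(x_k) - x_{k-i})`. -/
def ngmresUpdate {n : ℕ} (A : Matrix (Fin n) (Fin n) ℝ) (b : Fin n → ℝ)
    (x : ℕ → Fin n → ℝ) (β : ℕ → ℝ) (k mk : ℕ) : Fin n → ℝ :=
  qmap A b (x k) + ∑ i ∈ Finset.range (mk + 1), β i • (qmap A b (x k) - x (k - i))

/-- The NGMRES iteration with window function `mk` (e.g. `mk k = min k m` for NGMRES(m),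
`mk k = k` for full NGMRES): each step uses coefficients minimizing the 2-norm of the
next residual. -/
def IsNGMRES {n : ℕ} (A : Matrix (Fin n) (Fin n) ℝ) (b x0 : Fin n → ℝ) (mk : ℕ → ℕ)
    (x : ℕ → Fin n → ℝ) (β : ℕ → ℕ → ℝ) : Prop :=
  x 0 = x0 ∧ ∀ k, x (k + 1) = ngmresUpdate A b x (β k) k (mk k) ∧
    ∀ β' : ℕ → ℝ, norm2 (residv A b (x (k + 1))) ≤
      norm2 (residv A b (ngmresUpdate A b x β' k (mk k)))

/-- The Krylov subspace `span {r0, A r0, …, A^{k-1} r0}`. -/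
def krylov {n : ℕ} (A : Matrix (Fin n) (Fin n) ℝ) (r0 : Fin n → ℝ) (k : ℕ) :
    Submodule ℝ (Fin n → ℝ) :=
  Submodule.span ℝ {v | ∃ i < k, v = (A ^ i).mulVec r0}

/-- GMRES: `x_k` minimizes the residual 2-norm over the affine space `x0 + K_k`. -/
def IsGMRES {n : ℕ} (A : Matrix (Fin n) (Fin n) ℝ) (b x0 : Fin n → ℝ)
    (x : ℕ → Fin n → ℝ) : Prop :=
  x 0 = x0 ∧ ∀ k, x k - x0 ∈ krylov A (residv A b x0) k ∧
    ∀ y : Fin n → ℝ, y - x0 ∈ krylov A (residv A b x0) k →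
      norm2 (residv A b (x k)) ≤ norm2 (residv A b y)

/-- One Anderson acceleration update from step `k`, with window `mk`:
`x_{k+1} = q(x_k) + ∑_{i=1}^{mk} γ_i (q(x_k) - q(x_{k-i}))`. -/
def aaUpdate {n : ℕ} (A : Matrix (Fin n) (Fin n) ℝ) (b : Fin n → ℝ)
    (x : ℕ → Fin n → ℝ) (γ : ℕ → ℝ) (k mk : ℕ) : Fin n → ℝ :=
  qmap A b (x k) + ∑ i ∈ Finset.Icc 1 mk, γ i • (qmap A b (x k) - qmap A b (x (k - i)))

/-- The Anderson acceleration least-squares objective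
`r(x_k) + ∑_{i=1}^{mk} γ_i (r(x_k) - r(x_{k-i}))`. -/
def aaObj {n : ℕ} (A : Matrix (Fin n) (Fin n) ℝ) (b : Fin n → ℝ)
    (x : ℕ → Fin n → ℝ) (γ : ℕ → ℝ) (k mk : ℕ) : Fin n → ℝ :=
  residv A b (x k) + ∑ i ∈ Finset.Icc 1 mk, γ i • (residv A b (x k) - residv A b (x (k - i)))

/-- Anderson acceleration with window function `mk`. -/
def IsAA {n : ℕ} (A : Matrix (Fin n) (Fin n) ℝ) (b x0 : Fin n → ℝ) (mk : ℕ → ℕ)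
    (x : ℕ → Fin n → ℝ) (γ : ℕ → ℕ → ℝ) : Prop :=
  x 0 = x0 ∧ ∀ k, x (k + 1) = aaUpdate A b x (γ k) k (mk k) ∧
    ∀ γ' : ℕ → ℝ, norm2 (aaObj A b x (γ k) k (mk k)) ≤ norm2 (aaObj A b x γ' k (mk k))

/-- The spectral norm `‖A‖₂` (the ℓ²→ℓ² operator norm). -/
def specNorm {n : ℕ} (A : Matrix (Fin n) (Fin n) ℝ) : ℝ :=
  ‖LinearMap.toContinuousLinearMap (Matrix.toEuclideanLin A)‖

/-- The spectral radius of a real matrix (computed over `ℂ`). -/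
def specRad {n : ℕ} (M : Matrix (Fin n) (Fin n) ℝ) : ℝ :=
  (spectralRadius ℂ (M.map Complex.ofReal)).toReal


namespace Stmt8Aux

variable {n : ℕ} (A : Matrix (Fin n) (Fin n) ℝ) (b : Fin n → ℝ)

lemma mulVec_sum' {ι : Type*} (s : Finset ι) (f : ι → Fin n → ℝ) :
    A.mulVec (∑ i ∈ s, f i) = ∑ i ∈ s, A.mulVec (f i) := by
  rw [← Matrix.mulVecLin_apply, map_sum]; simp [Matrix.mulVecLin_apply]

lemma residv_add (x y : Fin n → ℝ) :
    residv A b (x + y) = residv A b x + A.mulVec y := by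
  simp [residv, mulVec_add]; abel

lemma residv_qmap (x : Fin n → ℝ) :
    residv A b (qmap A b x) = (1 - A).mulVec (residv A b x) := by
  simp only [residv, qmap, mulVec_add, mulVec_sub, sub_mulVec, one_mulVec,
    Matrix.mulVec_mulVec, Matrix.mul_sub, Matrix.sub_mul, Matrix.mul_one, Matrix.one_mul]
  abel

lemma qmap_add (x y : Fin n → ℝ) :
    qmap A b (x + y) = qmap A b x + (1 - A).mulVec y := by
  simp [qmap, mulVec_add]; abel

lemma norm2_le_iff (u v : Fin n → ℝ) : norm2 u ≤ norm2 v ↔ u ⬝ᵥ u ≤ v ⬝ᵥ v := by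
  have hv : (0:ℝ) ≤ v ⬝ᵥ v := Finset.sum_nonneg fun i _ => mul_self_nonneg _
  exact Real.sqrt_le_sqrt_iff hv

lemma dot_self_nonneg (u : Fin n → ℝ) : (0:ℝ) ≤ u ⬝ᵥ u :=
  Finset.sum_nonneg fun _ _ => mul_self_nonneg _

lemma ortho_of_min (u w : Fin n → ℝ)
    (h : ∀ t : ℝ, u ⬝ᵥ u ≤ (u + t • w) ⬝ᵥ (u + t • w)) : u ⬝ᵥ w = 0 := by
  have hexp : ∀ t : ℝ, (u + t • w) ⬝ᵥ (u + t • w)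
      = u ⬝ᵥ u + 2 * t * (u ⬝ᵥ w) + t ^ 2 * (w ⬝ᵥ w) := by
    intro t
    simp [add_dotProduct, dotProduct_add, smul_dotProduct, dotProduct_smul,
      dotProduct_comm w u]
    ring
  by_cases hw : w ⬝ᵥ w = 0
  · have : w = 0 := dotProduct_self_eq_zero.mp hw
    simp [this]
  · set c := u ⬝ᵥ w with hc
    set W := w ⬝ᵥ w with hW
    have hwpos : 0 < W := lt_of_le_of_ne (dot_self_nonneg w) (Ne.symm hw)
    have h2 := h (-c / W)
    rw [hexp] at h2
    have key : 2 * (-c / W) * c + (-c / W) ^ 2 * W = -(c ^ 2) / W := by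
      field_simp; ring
    rw [add_assoc, key] at h2
    have h3 : 0 ≤ -(c ^ 2) / W := by linarith
    have h4 : 0 ≤ -(c ^ 2) := by
      have := mul_nonneg h3 (le_of_lt hwpos)
      rwa [div_mul_cancel₀] at this
      exact ne_of_gt hwpos
    nlinarith [sq_nonneg c]

variable (r0 : Fin n → ℝ)

lemma krylov_mono {j k : ℕ} (h : j ≤ k) : krylov A r0 j ≤ krylov A r0 k :=
  Submodule.span_mono (fun _ ⟨i, hi, he⟩ => ⟨i, lt_of_lt_of_le hi h, he⟩)

lemma pow_mem_krylov {i k : ℕ} (h : i < k) : (A ^ i).mulVec r0 ∈ krylov A r0 k :=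
  Submodule.subset_span ⟨i, h, rfl⟩

lemma r0_mem_krylov {k : ℕ} (h : 0 < k) : r0 ∈ krylov A r0 k := by
  have := pow_mem_krylov A r0 h
  rwa [pow_zero, one_mulVec] at this

lemma krylov_zero : krylov A r0 0 = ⊥ := by
  rw [krylov]
  convert Submodule.span_empty
  ext v; simp

lemma krylov_one : krylov A r0 1 = Submodule.span ℝ {r0} := by
  rw [krylov]
  congr 1
  ext v
  constructor
  · rintro ⟨i, hi, rfl⟩
    interval_cases i
    simp
  · rintro rfl
    exact ⟨0, by simp⟩

lemma krylov_succ (k : ℕ) :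
    krylov A r0 (k + 1) = krylov A r0 k ⊔ Submodule.span ℝ {(A ^ k).mulVec r0} := by
  rw [krylov, krylov, ← Submodule.span_union]
  congr 1
  ext v
  constructor
  · rintro ⟨i, hi, rfl⟩
    rcases Nat.lt_succ_iff_lt_or_eq.mp hi with h | rfl
    · exact Or.inl ⟨i, h, rfl⟩
    · exact Or.inr rfl
  · rintro (⟨i, hi, rfl⟩ | rfl)
    · exact ⟨i, Nat.lt_succ_of_lt hi, rfl⟩
    · exact ⟨k, Nat.lt_succ_self k, rfl⟩

lemma mulVec_mem_krylov {k : ℕ} {v : Fin n → ℝ} (h : v ∈ krylov A r0 k) :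
    A.mulVec v ∈ krylov A r0 (k + 1) := by
  have hle : krylov A r0 k ≤ (krylov A r0 (k + 1)).comap A.mulVecLin := by
    rw [krylov, Submodule.span_le]
    rintro w ⟨i, hi, rfl⟩
    simp only [Submodule.mem_comap, Matrix.mulVecLin_apply, SetLike.mem_coe]
    rw [Matrix.mulVec_mulVec, ← pow_succ']
    exact pow_mem_krylov A r0 (Nat.succ_lt_succ hi)
  simpa [Matrix.mulVecLin_apply] using hle h

lemma krylov_replace {j : ℕ} {d : Fin n → ℝ} (hd1 : d ∈ krylov A r0 (j + 1))
    (hd2 : d ∉ krylov A r0 j) :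
    krylov A r0 (j + 1) = krylov A r0 j ⊔ Submodule.span ℝ {d} := by
  rw [krylov_succ] at hd1 ⊢
  rcases Submodule.mem_sup.mp hd1 with ⟨u, hu, w, hw, rfl⟩
  rcases Submodule.mem_span_singleton.mp hw with ⟨c, rfl⟩
  have hc : c ≠ 0 := by
    rintro rfl
    simp at hd2
    exact hd2 hu
  apply le_antisymm
  · apply sup_le (le_sup_left)
    rw [Submodule.span_le, Set.singleton_subset_iff]
    have hd : u + c • (A ^ j).mulVec r0 ∈
        krylov A r0 j ⊔ Submodule.span ℝ {u + c • (A ^ j).mulVec r0} :=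
      Submodule.mem_sup_right (Submodule.mem_span_singleton_self _)
    have hmem := Submodule.smul_mem _ c⁻¹ (Submodule.sub_mem _ hd (Submodule.mem_sup_left hu))
    have heq : c⁻¹ • ((u + c • (A ^ j).mulVec r0) - u) = (A ^ j).mulVec r0 := by
      rw [add_sub_cancel_left, smul_smul, inv_mul_cancel₀ hc, one_smul]
    rwa [heq] at hmem
  · apply sup_le (le_sup_left)
    rw [Submodule.span_le, Set.singleton_subset_iff]
    exact Submodule.add_mem _ (Submodule.mem_sup_left hu)
      (Submodule.smul_mem _ _ (Submodule.mem_sup_right (Submodule.mem_span_singleton_self _)))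

lemma exists_coeffs {u : ℕ → Fin n → ℝ} {k : ℕ} {w : Fin n → ℝ}
    (h : w ∈ Submodule.span ℝ {v | ∃ i, 1 ≤ i ∧ i ≤ k ∧ v = u i}) :
    ∃ γ : ℕ → ℝ, ∑ i ∈ Finset.Icc 1 k, γ i • u i = w := by
  induction h using Submodule.span_induction with
  | mem v hv =>
    obtain ⟨i0, h1, h2, rfl⟩ := hv
    refine ⟨fun i => if i = i0 then 1 else 0, ?_⟩
    rw [Finset.sum_eq_single i0]
    · simp
    · intro i _ hi; simp [hi]
    · intro hmem; exact absurd (Finset.mem_Icc.mpr ⟨h1, h2⟩) hmem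
  | zero => exact ⟨0, by simp⟩
  | add v w _ _ hv hw =>
    obtain ⟨γ1, h1⟩ := hv; obtain ⟨γ2, h2⟩ := hw
    exact ⟨γ1 + γ2, by simp [add_smul, Finset.sum_add_distrib, h1, h2]⟩
  | smul c v _ hv =>
    obtain ⟨γ1, h1⟩ := hv
    refine ⟨c • γ1, ?_⟩
    rw [← h1, Finset.smul_sum]
    exact Finset.sum_congr rfl fun i _ => by rw [Pi.smul_apply, smul_eq_mul, mul_smul]

def zcomb {n : ℕ} (x : ℕ → Fin n → ℝ) (γ : ℕ → ℝ) (k mk : ℕ) : Fin n → ℝ :=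
  x k + ∑ i ∈ Finset.Icc 1 mk, γ i • (x k - x (k - i))

lemma aaUpdate_eq (x : ℕ → Fin n → ℝ) (γ : ℕ → ℝ) (k mk : ℕ) :
    aaUpdate A b x γ k mk = qmap A b (zcomb x γ k mk) := by
  rw [zcomb, qmap_add, aaUpdate]
  congr 1
  rw [mulVec_sum']
  refine Finset.sum_congr rfl fun i _ => ?_
  rw [mulVec_smul, mulVec_sub]
  congr 1
  simp [qmap]

lemma aaObj_eq (x : ℕ → Fin n → ℝ) (γ : ℕ → ℝ) (k mk : ℕ) :
    aaObj A b x γ k mk = residv A b (zcomb x γ k mk) := by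
  rw [zcomb, residv_add, aaObj]
  congr 1
  rw [mulVec_sum']
  refine Finset.sum_congr rfl fun i _ => ?_
  rw [mulVec_smul, mulVec_sub]
  congr 1
  simp [residv]

end Stmt8Aux

open Stmt8Aux in
/-- for full AA with `A` and `M = I - A` invertible (under the hypotheses
guaranteeing `x_{k+1}^A = x_k^G - r_k^G`): (i) `r_{k+1}^A = M r_k^G` and
`‖M⁻¹ r_{k+1}^A‖ = ‖r_k^G‖`; (ii) `M⁻¹ r_{k+1}^A ⊥ A K_k`;
(iii) if `M` is symmetric then `r_{k+1}^A ⊥ M⁻¹ A K_k`. -/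
theorem stmt8 (n : ℕ) (A : Matrix (Fin n) (Fin n) ℝ) (b x0 xstar : Fin n → ℝ)
    (hA : IsUnit A.det) (hM : IsUnit (1 - A).det)
    (xA xG : ℕ → Fin n → ℝ) (γ : ℕ → ℕ → ℝ)
    (hAA : IsAA A b x0 (fun k => k) xA γ)
    (hG : IsGMRES A b x0 xG)
    (hstar : A.mulVec xstar = b) (hx0 : x0 ≠ xstar)
    (k0 : ℕ) (hk0 : 0 < k0)
    (hrk0 : residv A b (xG (k0 - 1)) ≠ 0)
    (hdec : ∀ k, 0 < k → k < k0 →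
      norm2 (residv A b (xG k)) < norm2 (residv A b (xG (k - 1)))) :
    ∀ k, k < k0 →
      (residv A b (xA (k + 1)) = (1 - A).mulVec (residv A b (xG k)) ∧
        norm2 ((1 - A)⁻¹.mulVec (residv A b (xA (k + 1)))) = norm2 (residv A b (xG k))) ∧
      (∀ v ∈ krylov A (residv A b x0) k,
        (1 - A)⁻¹.mulVec (residv A b (xA (k + 1))) ⬝ᵥ A.mulVec v = 0) ∧
      ((1 - A).IsSymm → ∀ v ∈ krylov A (residv A b x0) k,
        residv A b (xA (k + 1)) ⬝ᵥ (1 - A)⁻¹.mulVec (A.mulVec v) = 0) := by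

  have hG0 : xG 0 = x0 := hG.1
  have hA0 : xA 0 = x0 := hAA.1
  have hGmem : ∀ j, xG j - x0 ∈ krylov A (residv A b x0) j := fun j => (hG.2 j).1
  have hGmin : ∀ j y, y - x0 ∈ krylov A (residv A b x0) j →
      norm2 (residv A b (xG j)) ≤ norm2 (residv A b y) := fun j => (hG.2 j).2
  have hAup : ∀ k, xA (k + 1) = aaUpdate A b xA (γ k) k k := fun k => (hAA.2 k).1
  have hAmin : ∀ k (γ' : ℕ → ℝ),
      norm2 (aaObj A b xA (γ k) k k) ≤ norm2 (aaObj A b xA γ' k k) := fun k => (hAA.2 k).2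
  -- M d_j ∈ K_k whenever j < k
  have hMd_mem : ∀ j k, j < k →
      (1 - A).mulVec (xG j - x0) ∈ krylov A (residv A b x0) k := by
    intro j k hjk
    rw [sub_mulVec, one_mulVec]
    exact Submodule.sub_mem _ (krylov_mono A _ (le_of_lt hjk) (hGmem j))
      (krylov_mono A _ hjk (mulVec_mem_krylov A _ (hGmem j)))
  -- no stagnation: d_j ∉ K_{j-1}
  have hdnot : ∀ j, 0 < j → j < k0 → xG j - x0 ∉ krylov A (residv A b x0) (j - 1) := by
    intro j h0 hj hmem
    have h1 := hGmin (j - 1) (xG j) hmem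
    have h2 := hdec j h0 hj
    linarith
  -- the span claim
  have claim : ∀ j, j < k0 →
      Submodule.span ℝ ({residv A b x0} ∪
        {v | ∃ l, 1 ≤ l ∧ l ≤ j ∧ v = (1 - A).mulVec (xG l - x0)})
      = krylov A (residv A b x0) (j + 1) := by
    intro j
    induction j with
    | zero =>
      intro _
      rw [krylov_one]
      congr 1
      ext v
      simp only [Set.mem_union, Set.mem_singleton_iff, Set.mem_setOf_eq]
      constructor
      · rintro (rfl | ⟨l, h1, h2, _⟩)
        · rfl
        · omega
      · rintro rfl; exact Or.inl rfl
    | succ j ihj =>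
      intro hj
      have ihj' := ihj (by omega)
      have hd1 : xG (j + 1) - x0 ∈ krylov A (residv A b x0) (j + 1) := hGmem (j + 1)
      have hd2 : xG (j + 1) - x0 ∉ krylov A (residv A b x0) j := by
        have := hdnot (j + 1) (by omega) hj
        simpa using this
      have hrep := krylov_replace A (residv A b x0) hd1 hd2
      -- split off the new generator
      have hset : ({residv A b x0} ∪
          {v | ∃ l, 1 ≤ l ∧ l ≤ j + 1 ∧ v = (1 - A).mulVec (xG l - x0)})
          = (({residv A b x0} ∪
            {v | ∃ l, 1 ≤ l ∧ l ≤ j ∧ v = (1 - A).mulVec (xG l - x0)}) ∪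
            {(1 - A).mulVec (xG (j + 1) - x0)}) := by
        ext v
        simp only [Set.mem_union, Set.mem_singleton_iff, Set.mem_setOf_eq]
        constructor
        · rintro (rfl | ⟨l, h1, h2, rfl⟩)
          · exact Or.inl (Or.inl rfl)
          · rcases Nat.lt_succ_iff_lt_or_eq.mp (Nat.lt_succ_of_le h2) with h | rfl
            · exact Or.inl (Or.inr ⟨l, h1, by omega, rfl⟩)
            · exact Or.inr rfl
        · rintro ((rfl | ⟨l, h1, h2, rfl⟩) | rfl)
          · exact Or.inl rfl
          · exact Or.inr ⟨l, h1, by omega, rfl⟩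
          · exact Or.inr ⟨j + 1, by omega, le_rfl, rfl⟩
      rw [hset, Submodule.span_union, ihj']
      by_cases hAd : A.mulVec (xG (j + 1) - x0) ∈ krylov A (residv A b x0) (j + 1)
      · -- stagnating Krylov space
        have hMdK : (1 - A).mulVec (xG (j + 1) - x0) ∈ krylov A (residv A b x0) (j + 1) := by
          rw [sub_mulVec, one_mulVec]
          exact Submodule.sub_mem _ hd1 hAd
        have hKsucc : krylov A (residv A b x0) (j + 2) = krylov A (residv A b x0) (j + 1) := by
          rw [krylov_succ]
          refine le_antisymm (sup_le le_rfl ?_) le_sup_left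
          rw [Submodule.span_le, Set.singleton_subset_iff]
          have hpj : (A ^ j).mulVec (residv A b x0) ∈ krylov A (residv A b x0) (j + 1) :=
            pow_mem_krylov A _ (Nat.lt_succ_self j)
          rw [hrep] at hpj
          rcases Submodule.mem_sup.mp hpj with ⟨u, hu, w, hw, heq⟩
          rcases Submodule.mem_span_singleton.mp hw with ⟨c, rfl⟩
          have : (A ^ (j + 1)).mulVec (residv A b x0)
              = A.mulVec u + c • A.mulVec (xG (j + 1) - x0) := by
            rw [pow_succ', ← Matrix.mulVec_mulVec, ← heq, mulVec_add, mulVec_smul]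
          rw [this]
          exact Submodule.add_mem _ (mulVec_mem_krylov A _ hu)
            (Submodule.smul_mem _ _ hAd)
        rw [hKsucc]
        refine le_antisymm (sup_le le_rfl ?_) le_sup_left
        rw [Submodule.span_le, Set.singleton_subset_iff]
        exact hMdK
      · -- Krylov space grows
        have hMd_not : (1 - A).mulVec (xG (j + 1) - x0) ∉ krylov A (residv A b x0) (j + 1) := by
          intro hc
          apply hAd
          rw [sub_mulVec, one_mulVec] at hc
          have := Submodule.sub_mem _ hd1 hc
          simpa using this
        have hMd_in : (1 - A).mulVec (xG (j + 1) - x0) ∈ krylov A (residv A b x0) (j + 2) := by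
          rw [sub_mulVec, one_mulVec]
          exact Submodule.sub_mem _ (krylov_mono A _ (by omega) hd1)
            (mulVec_mem_krylov A _ hd1)
        exact (krylov_replace A (residv A b x0) hMd_in hMd_not).symm
  -- main equivalence, by strong induction
  have main : ∀ k, k < k0 →
      xA (k + 1) = qmap A b (xG k) ∧
      aaObj A b xA (γ k) k k = residv A b (xG k) := by
    intro k
    induction k using Nat.strong_induction_on with
    | h k ih =>
    intro hk
    -- prior AA iterates in terms of GMRES
    have hxAe : ∀ l, 1 ≤ l → l ≤ k →
        xA l - x0 = (1 - A).mulVec (xG (l - 1) - x0) - residv A b x0 := by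
      intro l h1 h2
      have h := (ih (l - 1) (by omega) (by omega)).1
      rw [show l - 1 + 1 = l by omega] at h
      rw [h]
      simp only [qmap, residv, mulVec_sub, sub_mulVec, one_mulVec]
      abel
    have heK : ∀ l, l ≤ k → xA l - x0 ∈ krylov A (residv A b x0) k := by
      intro l hl
      rcases Nat.eq_zero_or_pos l with rfl | hl0
      · rw [hA0, sub_self]; exact Submodule.zero_mem _
      · rw [hxAe l hl0 hl]
        exact Submodule.sub_mem _ (hMd_mem (l - 1) k (by omega))
          (r0_mem_krylov A _ (by omega))
    have hgen : ∀ i, 1 ≤ i → i ≤ k →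
        xA k - xA (k - i) ∈ krylov A (residv A b x0) k := by
      intro i h1 h2
      have : xA k - xA (k - i) = (xA k - x0) - (xA (k - i) - x0) := by abel
      rw [this]
      exact Submodule.sub_mem _ (heK k le_rfl) (heK (k - i) (by omega))
    -- span of the AA differences is the Krylov space
    have hspanE : Submodule.span ℝ {v | ∃ i, 1 ≤ i ∧ i ≤ k ∧ v = xA k - xA (k - i)}
        = krylov A (residv A b x0) k := by
      rcases Nat.eq_zero_or_pos k with rfl | hkpos
      · rw [krylov_zero]
        convert Submodule.span_empty
        · ext v; simp only [Set.mem_setOf_eq, Set.mem_empty_iff_false, iff_false]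
          rintro ⟨i, h1, h2, _⟩; omega
      · apply le_antisymm
        · rw [Submodule.span_le]
          rintro v ⟨i, h1, h2, rfl⟩
          exact hgen i h1 h2
        · have hck := claim (k - 1) (by omega)
          rw [show k - 1 + 1 = k by omega] at hck
          rw [← hck, Submodule.span_le]
          have hEmem : ∀ l, l ≤ k → xA k - xA l ∈
              Submodule.span ℝ {v | ∃ i, 1 ≤ i ∧ i ≤ k ∧ v = xA k - xA (k - i)} := by
            intro l hl
            rcases eq_or_lt_of_le hl with rfl | hlk
            · rw [sub_self]; exact Submodule.zero_mem _
            · exact Submodule.subset_span ⟨k - l, by omega, by omega,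
                by rw [show k - (k - l) = l by omega]⟩
          have h1e := hxAe 1 le_rfl hkpos
          rw [hG0, sub_self, mulVec_zero, zero_sub] at h1e
          have hr0E : residv A b x0 ∈
              Submodule.span ℝ {v | ∃ i, 1 ≤ i ∧ i ≤ k ∧ v = xA k - xA (k - i)} := by
            have heq : residv A b x0 = (xA k - xA 1) - (xA k - xA 0) := by
              rw [hA0]
              have : xA 1 = x0 - residv A b x0 := by
                have := h1e; rw [sub_eq_iff_eq_add] at this
                rw [this]; abel
              rw [this]; abel
            rw [heq]
            exact Submodule.sub_mem _ (hEmem 1 hkpos) (hEmem 0 (by omega))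
          rintro v (rfl | ⟨l, hl1, hl2, rfl⟩)
          · exact hr0E
          · have hle := hxAe (l + 1) (by omega) (by omega)
            rw [show l + 1 - 1 = l by omega] at hle
            have heq : (1 - A).mulVec (xG l - x0)
                = ((xA k - xA 0) - (xA k - xA (l + 1))) + residv A b x0 := by
              have h2 : (1 - A).mulVec (xG l - x0) = (xA (l + 1) - x0) + residv A b x0 := by
                rw [hle]; abel
              rw [h2, hA0]; abel
            rw [heq]
            exact Submodule.add_mem _
              (Submodule.sub_mem _ (hEmem 0 (by omega)) (hEmem (l + 1) (by omega))) hr0E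
    -- the combination points stay in x0 + K_k
    have hzmem : ∀ γ' : ℕ → ℝ, zcomb xA γ' k k - x0 ∈ krylov A (residv A b x0) k := by
      intro γ'
      have : zcomb xA γ' k k - x0
          = (xA k - x0) + ∑ i ∈ Finset.Icc 1 k, γ' i • (xA k - xA (k - i)) := by
        rw [zcomb]; abel
      rw [this]
      refine Submodule.add_mem _ (heK k le_rfl) (Submodule.sum_mem _ fun i hi => ?_)
      rcases Finset.mem_Icc.mp hi with ⟨h1, h2⟩
      exact Submodule.smul_mem _ _ (hgen i h1 h2)
    have hover : ∀ γ' : ℕ → ℝ, aaObj A b xA γ' k k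
        = residv A b x0 + A.mulVec (zcomb xA γ' k k - x0) := by
      intro γ'
      rw [aaObj_eq]
      conv_lhs => rw [show zcomb xA γ' k k = x0 + (zcomb xA γ' k k - x0) from by abel]
      rw [residv_add]
    have hsurj : ∀ w ∈ krylov A (residv A b x0) k, ∃ γ' : ℕ → ℝ,
        zcomb xA γ' k k = x0 + w := by
      intro w hw
      have hw2 : w - (xA k - x0) ∈
          Submodule.span ℝ {v | ∃ i, 1 ≤ i ∧ i ≤ k ∧ v = xA k - xA (k - i)} := by
        rw [hspanE]
        exact Submodule.sub_mem _ hw (heK k le_rfl)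
      obtain ⟨γ', hγ'⟩ := exists_coeffs hw2
      refine ⟨γ', ?_⟩
      rw [zcomb, hγ']
      abel
    have humin : ∀ w ∈ krylov A (residv A b x0) k,
        norm2 (aaObj A b xA (γ k) k k) ≤ norm2 (residv A b x0 + A.mulVec w) := by
      intro w hw
      obtain ⟨γ', hz⟩ := hsurj w hw
      have h1 := hAmin k γ'
      rwa [hover γ', hz, show x0 + w - x0 = w by abel] at h1
    have hvm : residv A b (xG k) = residv A b x0 + A.mulVec (xG k - x0) := by
      conv_lhs => rw [show xG k = x0 + (xG k - x0) from by abel]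
      rw [residv_add]
    have hvmin : ∀ w ∈ krylov A (residv A b x0) k,
        norm2 (residv A b (xG k)) ≤ norm2 (residv A b x0 + A.mulVec w) := by
      intro w hw
      have h1 := hGmin k (x0 + w) (by rwa [add_sub_cancel_left])
      rwa [residv_add] at h1
    -- uniqueness of the minimal residual
    set u := aaObj A b xA (γ k) k k with hu_def
    set v := residv A b (xG k) with hv_def
    have hu_eq : u = residv A b x0 + A.mulVec (zcomb xA (γ k) k k - x0) := hover (γ k)
    have h1 : norm2 u ≤ norm2 v := by
      rw [hvm]; exact humin _ (hGmem k)
    have h2 : norm2 v ≤ norm2 u := by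
      rw [hu_eq]; exact hvmin _ (hzmem (γ k))
    have hαβ : u ⬝ᵥ u = v ⬝ᵥ v :=
      le_antisymm ((norm2_le_iff u v).mp h1) ((norm2_le_iff v u).mp h2)
    have hwm : ((1/2 : ℝ) • ((zcomb xA (γ k) k k - x0) + (xG k - x0)))
        ∈ krylov A (residv A b x0) k :=
      Submodule.smul_mem _ _ (Submodule.add_mem _ (hzmem (γ k)) (hGmem k))
    have hmid : residv A b x0
          + A.mulVec ((1/2 : ℝ) • ((zcomb xA (γ k) k k - x0) + (xG k - x0)))
        = (1/2 : ℝ) • (u + v) := by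
      rw [hu_eq, hvm, mulVec_smul, mulVec_add]
      have hh : ∀ p q r : Fin n → ℝ,
          p + (1/2 : ℝ) • (q + r) = (1/2 : ℝ) • ((p + q) + (p + r)) := by
        intro p q r
        rw [smul_add, smul_add, smul_add]
        funext i
        simp only [Pi.add_apply, Pi.smul_apply, smul_eq_mul]
        ring
      exact hh _ _ _
    have hle : norm2 u ≤ norm2 ((1/2 : ℝ) • (u + v)) := by
      rw [← hmid]; exact humin _ hwm
    have hdotle := (norm2_le_iff _ _).mp hle
    have hmidexp : ((1/2 : ℝ) • (u + v)) ⬝ᵥ ((1/2 : ℝ) • (u + v))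
        = (1/4) * (u ⬝ᵥ u + 2 * (u ⬝ᵥ v) + v ⬝ᵥ v) := by
      simp [smul_dotProduct, dotProduct_smul, add_dotProduct, dotProduct_add,
        dotProduct_comm v u]
      ring
    have hsubexp : (u - v) ⬝ᵥ (u - v) = u ⬝ᵥ u - 2 * (u ⬝ᵥ v) + v ⬝ᵥ v := by
      simp [sub_dotProduct, dotProduct_sub, dotProduct_comm v u]
      ring
    have hsub0 : (u - v) ⬝ᵥ (u - v) = 0 := by
      have hnn := dot_self_nonneg (u - v)
      rw [hmidexp] at hdotle
      linarith [hsubexp, hαβ]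
    have huv : u = v := by
      have := dotProduct_self_eq_zero.mp hsub0
      exact sub_eq_zero.mp this
    constructor
    · -- xA (k+1) = qmap (xG k)
      have hup : xA (k + 1) = qmap A b (zcomb xA (γ k) k k) := by
        rw [hAup k, aaUpdate_eq]
      have hres : residv A b (zcomb xA (γ k) k k) = residv A b (xG k) := by
        rw [← aaObj_eq]
        exact huv
      have hinj : zcomb xA (γ k) k k = xG k := by
        have hAinj : Function.Injective A.mulVec :=
          mulVec_injective_iff_isUnit.mpr ((Matrix.isUnit_iff_isUnit_det A).mpr hA)
        apply hAinj
        have := hres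
        simp only [residv] at this
        have h3 : A.mulVec (zcomb xA (γ k) k k) - b + b = A.mulVec (xG k) - b + b := by
          rw [this]
        simpa using h3
      rw [hup, hinj]
    · exact huv
  -- conclude
  intro k hk
  obtain ⟨ha, hb⟩ := main k hk
  have h1 : residv A b (xA (k + 1)) = (1 - A).mulVec (residv A b (xG k)) := by
    rw [ha, residv_qmap]
  have hMinv : (1 - A)⁻¹.mulVec (residv A b (xA (k + 1))) = residv A b (xG k) := by
    rw [h1, Matrix.mulVec_mulVec, Matrix.nonsing_inv_mul _ hM, one_mulVec]
  -- orthogonality of the GMRES residual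
  have horth : ∀ w ∈ krylov A (residv A b x0) k,
      residv A b (xG k) ⬝ᵥ A.mulVec w = 0 := by
    intro w hw
    apply ortho_of_min
    intro t
    have hmem : (xG k + t • w) - x0 ∈ krylov A (residv A b x0) k := by
      have : (xG k + t • w) - x0 = (xG k - x0) + t • w := by abel
      rw [this]
      exact Submodule.add_mem _ (hGmem k) (Submodule.smul_mem _ _ hw)
    have h2 := hGmin k (xG k + t • w) hmem
    rw [residv_add, mulVec_smul] at h2
    exact (norm2_le_iff _ _).mp h2
  refine ⟨⟨h1, by rw [hMinv]⟩, ?_, ?_⟩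
  · intro w hw
    rw [hMinv]
    exact horth w hw
  · intro hsym w hw
    rw [h1, dotProduct_comm, dotProduct_mulVec]
    have hvm2 : ((1 - A)⁻¹.mulVec (A.mulVec w)) ᵥ* (1 - A)
        = (1 - A).mulVec ((1 - A)⁻¹.mulVec (A.mulVec w)) := by
      rw [← Matrix.mulVec_transpose, hsym.eq]
    rw [hvm2, Matrix.mulVec_mulVec, Matrix.mul_nonsing_inv _ hM, one_mulVec,
      dotProduct_comm]
    exact horth w hw


end
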